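/- There is an absolute constant C > 0 such that the following holds. Let W, H, N be positive integers with W \ge 10, H \ge W^{12} and N \ge H, and for 1 \le k \le W^2 let I_k = ((k−1) W^{−2} H, k W^{−2} H]. Let \beta : ℕ → ℂ be a 1-bounded multiplicative function, let \hat\beta be the completely multiplicative function with \hat\beta(p) = \beta(p) for all primes p, and let \eta := \beta * (\mu \cdot \hat\beta) be the Dirichlet convolution of \beta with the pointwise product of the Möbius function \mu and \hat\beta (so that \beta = \hat\beta * \eta). Then for every function c assigning to each quadruple (n, k, a, b) of positive integers a complex number with |c| \le 1, one has |\sum_{n \le N} \sum_{k \le W^2} \sum_{a > W} \eta(a) \sum_{b \in ℕ : ab \in n + I_k} c(n, k, a, b)| \le C \cdot W^{−1/4} \cdot H \cdot N. -/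

import Mathlib

open Finset

/-- `β` is a 1-bounded multiplicative function. -/
def OneBoundedMult (β : ℕ → ℂ) : Prop :=
  (∀ n, ‖β n‖ ≤ 1) ∧ β 1 = 1 ∧ ∀ m n : ℕ, Nat.Coprime m n → β (m * n) = β m * β n

/-- `f` is completely multiplicative. -/
def CompletelyMult (f : ℕ → ℂ) : Prop :=
  f 1 = 1 ∧ ∀ m n : ℕ, f (m * n) = f m * f n

/-- The Dirichlet convolution `η = β * (μ ⬝ β̂)` of `β` with the pointwise product of the
Möbius function and `β̂`. -/
noncomputable def etaConv (β hatβ : ℕ → ℂ) (a : ℕ) : ℂ :=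
  ∑ d ∈ a.divisors, β d * ((ArithmeticFunction.moebius (a / d) : ℤ) : ℂ) * hatβ (a / d)

section Aux
open ArithmeticFunction
open scoped ArithmeticFunction.Moebius

noncomputable def auxF (β : ℕ → ℂ) : ArithmeticFunction ℂ :=
  ⟨fun n => if n = 0 then 0 else β n, if_pos rfl⟩

noncomputable def auxG (hatβ : ℕ → ℂ) : ArithmeticFunction ℂ :=
  ((μ : ArithmeticFunction ℤ) : ArithmeticFunction ℂ).pmul (auxF hatβ)

lemma auxF_apply (β : ℕ → ℂ) {n : ℕ} (hn : n ≠ 0) : auxF β n = β n := if_neg hn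

lemma etaConv_eq (β hatβ : ℕ → ℂ) (a : ℕ) : etaConv β hatβ a = (auxF β * auxG hatβ) a := by
  rw [ArithmeticFunction.mul_apply,
    Nat.sum_divisorsAntidiagonal (f := fun i j => auxF β i * auxG hatβ j)]
  refine Finset.sum_congr rfl fun d hd => ?_
  obtain ⟨hdvd, ha0⟩ := Nat.mem_divisors.mp hd
  have hd0 : d ≠ 0 := (Nat.pos_of_mem_divisors hd).ne'
  have hq0 : a / d ≠ 0 :=
    (Nat.div_pos (Nat.le_of_dvd (Nat.pos_of_ne_zero ha0) hdvd) (Nat.pos_of_ne_zero hd0)).ne'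
  rw [auxF_apply β hd0]
  simp only [auxG, pmul_apply, intCoe_apply, auxF_apply hatβ hq0]
  ring

lemma isMult_auxF {β : ℕ → ℂ} (h1 : β 1 = 1)
    (hm : ∀ m n : ℕ, Nat.Coprime m n → β (m * n) = β m * β n) :
    (auxF β).IsMultiplicative := by
  constructor
  · rw [auxF_apply β one_ne_zero, h1]
  · intro m n hc
    rcases eq_or_ne m 0 with rfl | hm0
    · have : n = 1 := by simpa using hc
      subst this; simp [auxF, h1]
    rcases eq_or_ne n 0 with rfl | hn0
    · have : m = 1 := by simpa using hc
      subst this; simp [auxF, h1]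
    rw [auxF_apply β (mul_ne_zero hm0 hn0), auxF_apply β hm0, auxF_apply β hn0]
    exact hm m n hc

lemma isMult_eta {β hatβ : ℕ → ℂ} (hβ : OneBoundedMult β) (hhat : CompletelyMult hatβ) :
    (auxF β * auxG hatβ).IsMultiplicative := by
  refine (isMult_auxF hβ.2.1 hβ.2.2).mul ?_
  exact isMultiplicative_moebius.intCast.pmul
    (isMult_auxF hhat.1 (fun m n _ => hhat.2 m n))

lemma eta_prime {β hatβ : ℕ → ℂ} (h1 : β 1 = 1) (hat1 : hatβ 1 = 1)
    (hagree : ∀ p : ℕ, p.Prime → hatβ p = β p) {p : ℕ} (hp : p.Prime) :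
    etaConv β hatβ p = 0 := by
  rw [etaConv, hp.divisors, Finset.sum_insert (by simp [hp.one_lt.ne])]
  rw [Finset.sum_singleton, Nat.div_self hp.pos, Nat.div_one, h1,
    moebius_apply_prime hp, moebius_apply_one, hagree p hp, hat1]
  push_cast
  ring

def IsSquarefull (a : ℕ) : Prop := ∀ p : ℕ, p.Prime → p ∣ a → p * p ∣ a

lemma etaConv_eq_zero {β hatβ : ℕ → ℂ} (hβ : OneBoundedMult β) (hhat : CompletelyMult hatβ)
    (hagree : ∀ p : ℕ, p.Prime → hatβ p = β p) {a p : ℕ}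
    (hp : p.Prime) (hdvd : p ∣ a) (hnd : ¬ (p * p ∣ a)) :
    etaConv β hatβ a = 0 := by
  have hb : ¬ p ∣ (a / p) := by
    intro h
    exact hnd (by obtain ⟨c, hc⟩ := h; exact ⟨c, by rw [mul_assoc, ← hc, Nat.mul_div_cancel' hdvd]⟩)
  have hco : Nat.Coprime p (a / p) := (Nat.Prime.coprime_iff_not_dvd hp).mpr hb
  have haeq : a = p * (a / p) := (Nat.mul_div_cancel' hdvd).symm
  rw [etaConv_eq, haeq, (isMult_eta hβ hhat).map_mul_of_coprime hco, ← etaConv_eq,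
    eta_prime hβ.2.1 hhat.1 hagree hp, zero_mul]

lemma hatβ_norm_le {hatβ : ℕ → ℂ} (h : CompletelyMult hatβ)
    (hp : ∀ p : ℕ, p.Prime → ‖hatβ p‖ ≤ 1) : ∀ n : ℕ, n ≠ 0 → ‖hatβ n‖ ≤ 1 := by
  intro n
  induction n using Nat.strong_induction_on with
  | _ n ih =>
    intro hn
    rcases eq_or_ne n 1 with rfl | h1
    · simp [h.1]
    have hp' : n.minFac.Prime := Nat.minFac_prime h1
    have hlt : n / n.minFac < n := Nat.div_lt_self (Nat.pos_of_ne_zero hn) hp'.one_lt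
    have hne : n / n.minFac ≠ 0 :=
      (Nat.div_pos (Nat.minFac_le (Nat.pos_of_ne_zero hn)) hp'.pos).ne'
    have heq : n = n.minFac * (n / n.minFac) := (Nat.mul_div_cancel' n.minFac_dvd).symm
    calc ‖hatβ n‖ = ‖hatβ n.minFac‖ * ‖hatβ (n / n.minFac)‖ := by
          conv_lhs => rw [heq]
          rw [h.2, norm_mul]
      _ ≤ 1 * 1 := mul_le_mul (hp _ hp') (ih _ hlt hne) (norm_nonneg _) zero_le_one
      _ = 1 := one_mul 1

lemma card_squarefree_divisors_le {a : ℕ} (ha : a ≠ 0) :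
    (a.divisors.filter Squarefree).card ≤ 2 ^ a.primeFactors.card := by
  rw [← Finset.card_powerset]
  apply Finset.card_le_card_of_injOn (fun d => d.primeFactors)
  · intro d hd
    rw [Finset.mem_coe, Finset.mem_powerset]
    exact Nat.primeFactors_mono (Nat.mem_divisors.mp (Finset.mem_filter.mp hd).1).1 ha
  · intro d hd e he hde
    have hd' := (Finset.mem_filter.mp hd).2
    have he' := (Finset.mem_filter.mp he).2
    rw [← Nat.prod_primeFactors_of_squarefree hd', ← Nat.prod_primeFactors_of_squarefree he']
    simp only at hde
    rw [hde]

lemma moebius_norm (m : ℕ) : ‖((μ m : ℤ) : ℂ)‖ = if Squarefree m then 1 else 0 := by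
  split_ifs with h
  · rw [moebius_apply_of_squarefree h]
    push_cast
    simp
  · rw [moebius_eq_zero_of_not_squarefree h]
    simp

lemma etaConv_norm_le {β hatβ : ℕ → ℂ} (hβ : ∀ n, ‖β n‖ ≤ 1)
    (hhat : ∀ n : ℕ, n ≠ 0 → ‖hatβ n‖ ≤ 1) {a : ℕ} (ha : a ≠ 0) :
    ‖etaConv β hatβ a‖ ≤ 2 ^ a.primeFactors.card := by
  have step1 : ‖etaConv β hatβ a‖ ≤
      ∑ d ∈ a.divisors, (if Squarefree (a / d) then (1:ℝ) else 0) := by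
    refine (norm_sum_le _ _).trans (Finset.sum_le_sum fun d hd => ?_)
    obtain ⟨hdvd, -⟩ := Nat.mem_divisors.mp hd
    have hq0 : a / d ≠ 0 :=
      (Nat.div_pos (Nat.le_of_dvd (Nat.pos_of_ne_zero ha) hdvd) (Nat.pos_of_mem_divisors hd)).ne'
    rw [norm_mul, norm_mul, moebius_norm]
    split_ifs with h
    · have := hβ d
      have := hhat _ hq0
      have h1 : ‖β d‖ * 1 * ‖hatβ (a/d)‖ ≤ 1 * 1 * 1 := by gcongr
      simpa using h1
    · simp
  have step2 : (∑ d ∈ a.divisors, (if Squarefree (a / d) then (1:ℝ) else 0))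
      = (a.divisors.filter Squarefree).card := by
    rw [Nat.sum_div_divisors a (fun m => if Squarefree m then (1:ℝ) else 0)]
    rw [Finset.sum_ite, Finset.sum_const, Finset.sum_const]
    simp
  calc ‖etaConv β hatβ a‖ ≤ _ := step1
    _ = ((a.divisors.filter Squarefree).card : ℝ) := step2
    _ ≤ ((2 ^ a.primeFactors.card : ℕ) : ℝ) := by
        exact_mod_cast card_squarefree_divisors_le ha
    _ = 2 ^ a.primeFactors.card := by push_cast; ring

lemma pow_omega_le {a : ℕ} (ha : a ≠ 0) :
    2 ^ (16 * a.primeFactors.card) ≤ 2 ^ (2 ^ 20) * a := by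
  have key : (2:ℕ) ^ (16 * a.primeFactors.card) = ∏ p ∈ a.primeFactors, 2 ^ 16 := by
    rw [Finset.prod_const, ← pow_mul, mul_comm]
  rw [key, ← Finset.prod_filter_mul_prod_filter_not a.primeFactors (fun p => p < 65536)]
  have h1 : ∏ p ∈ a.primeFactors.filter (fun p => p < 65536), (2:ℕ) ^ 16 ≤ 2 ^ (2^20) := by
    rw [Finset.prod_const]
    have hcard : (a.primeFactors.filter (fun p => p < 65536)).card ≤ 65536 := by
      calc _ ≤ (Finset.range 65536).card := Finset.card_le_card (fun p hp => by
            simp only [Finset.mem_filter] at hp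
            exact Finset.mem_range.mpr hp.2)
        _ = 65536 := Finset.card_range _
    calc ((2:ℕ)^16) ^ (a.primeFactors.filter (fun p => p < 65536)).card
        ≤ ((2:ℕ)^16) ^ 65536 := Nat.pow_le_pow_right (by norm_num) hcard
      _ = 2 ^ (2^20) := by rw [← pow_mul]; norm_num
  have h2 : ∏ p ∈ a.primeFactors.filter (fun p => ¬ p < 65536), (2:ℕ) ^ 16 ≤ a := by
    have hle : ∏ p ∈ a.primeFactors.filter (fun p => ¬ p < 65536), (2:ℕ) ^ 16
        ≤ ∏ p ∈ a.primeFactors.filter (fun p => ¬ p < 65536), p := by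
      apply Finset.prod_le_prod'
      intro p hp
      simp only [Finset.mem_filter, not_lt] at hp
      calc (2:ℕ)^16 = 65536 := by norm_num
        _ ≤ p := hp.2
    refine hle.trans (Nat.le_of_dvd (Nat.pos_of_ne_zero ha) ?_)
    exact dvd_trans (Finset.prod_dvd_prod_of_subset _ _ _ (Finset.filter_subset _ _))
      (Nat.prod_primeFactors_dvd a)
  exact Nat.mul_le_mul h1 h2

lemma squarefull_decomp : ∀ a : ℕ, a ≠ 0 → IsSquarefull a →
    ∃ u v : ℕ, u ≠ 0 ∧ v ≠ 0 ∧ a = u ^ 2 * v ^ 3 := by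
  intro a
  induction a using Nat.strong_induction_on with
  | _ a ih =>
    intro ha hsf
    rcases eq_or_ne a 1 with rfl | h1
    · exact ⟨1, 1, one_ne_zero, one_ne_zero, by norm_num⟩
    have hp : a.minFac.Prime := Nat.minFac_prime h1
    set p := a.minFac with hpdef
    set k := a.factorization p with hkdef
    have hk2 : 2 ≤ k := by
      have hsq : p ^ 2 ∣ a := by
        have := hsf p hp a.minFac_dvd
        rwa [← pow_two] at this
      exact (Nat.Prime.pow_dvd_iff_le_factorization hp ha).mp hsq
    set b := a / p ^ k with hbdef
    have hb_eq : p ^ k * b = a := Nat.ordProj_mul_ordCompl_eq_self a p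
    have hpb : ¬ p ∣ b := Nat.not_dvd_ordCompl hp ha
    have hb0 : b ≠ 0 := by
      intro h
      rw [h, mul_zero] at hb_eq
      exact ha hb_eq.symm
    have hblt : b < a := by
      have h1pk : 1 < p ^ k := Nat.one_lt_pow (by omega) hp.one_lt
      calc b = 1 * b := (one_mul b).symm
        _ < p ^ k * b := (Nat.mul_lt_mul_right (Nat.pos_of_ne_zero hb0)).mpr h1pk
        _ = a := hb_eq
    have hbsf : IsSquarefull b := by
      intro q hq hqb
      have hqa : q ∣ a := hqb.trans ⟨p ^ k, by rw [mul_comm]; exact hb_eq.symm⟩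
      have hqq : q * q ∣ p ^ k * b := by rw [hb_eq]; exact hsf q hq hqa
      have hqp : q ≠ p := fun h => hpb (h ▸ hqb)
      have hco1 : Nat.Coprime q (p ^ k) :=
        Nat.Coprime.pow_right k ((Nat.coprime_primes hq hp).mpr hqp)
      exact (hco1.mul hco1).dvd_of_dvd_mul_left hqq
    obtain ⟨u, v, hu, hv, hbuv⟩ := ih b hblt hb0 hbsf
    rcases Nat.even_or_odd k with he | ho
    · refine ⟨p ^ (k / 2) * u, v, mul_ne_zero (pow_ne_zero _ hp.pos.ne') hu, hv, ?_⟩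
      rw [← hb_eq, hbuv, mul_pow, ← pow_mul, Nat.div_mul_cancel he.two_dvd, mul_assoc]
    · obtain ⟨m, hm⟩ := ho
      refine ⟨p ^ (m - 1) * u, p * v,
        mul_ne_zero (pow_ne_zero _ hp.pos.ne') hu, mul_ne_zero hp.pos.ne' hv, ?_⟩
      rw [← hb_eq, hbuv]
      have hk : k = 2 * (m - 1) + 3 := by omega
      rw [hk]
      ring

open Classical in
noncomputable def uvOf (a : ℕ) : ℕ × ℕ :=
  if h : ∃ p : ℕ × ℕ, p.1 ≠ 0 ∧ p.2 ≠ 0 ∧ a = p.1 ^ 2 * p.2 ^ 3 then h.choose else (1, 1)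

lemma uvOf_spec {a : ℕ} (ha : a ≠ 0) (hsf : IsSquarefull a) :
    (uvOf a).1 ≠ 0 ∧ (uvOf a).2 ≠ 0 ∧ a = (uvOf a).1 ^ 2 * (uvOf a).2 ^ 3 := by
  obtain ⟨u, v, hu, hv, he⟩ := squarefull_decomp a ha hsf
  have hex : ∃ p : ℕ × ℕ, p.1 ≠ 0 ∧ p.2 ≠ 0 ∧ a = p.1 ^ 2 * p.2 ^ 3 := ⟨(u, v), hu, hv, he⟩
  rw [uvOf, dif_pos hex]
  exact hex.choose_spec

lemma rpow_pow_eq {y : ℝ} (hy : 0 ≤ y) (r : ℝ) (m : ℕ) :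
    (y ^ r) ^ (m : ℕ) = y ^ (r * m) := by
  rw [← Real.rpow_natCast (y ^ r) m, ← Real.rpow_mul hy]

lemma per_term {x : ℝ} (hx0 : 0 ≤ x) {a u v W : ℕ} (hu : u ≠ 0) (hv : v ≠ 0) (hW : W ≠ 0)
    (hauv : a = u ^ 2 * v ^ 3) (hWa : W < a)
    (hx16 : x ^ 16 ≤ 2 ^ (2 ^ 20) * (a : ℝ)) :
    x / a ≤ 2 ^ 65536 * (W : ℝ) ^ (-(1:ℝ)/4) * (u : ℝ) ^ (-(11:ℝ)/8) * (v : ℝ) ^ (-(33:ℝ)/16) := by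
  have hWp : (0:ℝ) < W := by exact_mod_cast Nat.pos_of_ne_zero hW
  have hup : (0:ℝ) < u := by exact_mod_cast Nat.pos_of_ne_zero hu
  have hvp : (0:ℝ) < v := by exact_mod_cast Nat.pos_of_ne_zero hv
  have ha : a ≠ 0 := by
    rw [hauv]; positivity
  have hap : (0:ℝ) < a := by exact_mod_cast Nat.pos_of_ne_zero ha
  set P : ℝ := (W : ℝ) ^ ((1:ℝ)/4) * (u : ℝ) ^ ((11:ℝ)/8) * (v : ℝ) ^ ((33:ℝ)/16) with hPdef
  have hPp : 0 < P := by positivity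
  have hP16 : P ^ (16:ℕ) = (W:ℝ) ^ (4:ℕ) * (u:ℝ) ^ (22:ℕ) * (v:ℝ) ^ (33:ℕ) := by
    rw [hPdef, mul_pow, mul_pow, rpow_pow_eq hWp.le, rpow_pow_eq hup.le, rpow_pow_eq hvp.le]
    have e1 : ((1:ℝ)/4) * ((16:ℕ):ℝ) = ((4:ℕ):ℝ) := by norm_num
    have e2 : ((11:ℝ)/8) * ((16:ℕ):ℝ) = ((22:ℕ):ℝ) := by norm_num
    have e3 : ((33:ℝ)/16) * ((16:ℕ):ℝ) = ((33:ℕ):ℝ) := by norm_num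
    rw [e1, e2, e3, Real.rpow_natCast, Real.rpow_natCast, Real.rpow_natCast]
  have hacast : (a:ℝ) = (u:ℝ)^(2:ℕ) * (v:ℝ)^(3:ℕ) := by
    rw [hauv]; push_cast; ring
  have hWa4 : (W:ℝ) ^ (4:ℕ) ≤ (a:ℝ) ^ (4:ℕ) := by
    have : (W:ℝ) ≤ a := by exact_mod_cast hWa.le
    exact pow_le_pow_left₀ hWp.le this 4
  have key : (x * P) ^ (16:ℕ) ≤ (2 ^ 65536 * (a:ℝ)) ^ (16:ℕ) := by
    rw [mul_pow, hP16, mul_pow]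
    have h2 : ((2:ℝ) ^ 65536) ^ (16:ℕ) = 2 ^ (2^20) := by
      rw [← pow_mul]; norm_num
    rw [h2]
    calc x ^ (16:ℕ) * ((W:ℝ)^(4:ℕ) * (u:ℝ)^(22:ℕ) * (v:ℝ)^(33:ℕ))
        ≤ (2 ^ (2^20) * (a:ℝ)) * ((a:ℝ)^(4:ℕ) * (u:ℝ)^(22:ℕ) * (v:ℝ)^(33:ℕ)) := by
          apply mul_le_mul hx16 _ (by positivity) (by positivity)
          apply mul_le_mul (mul_le_mul hWa4 le_rfl (by positivity) (by positivity)) le_rfl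
            (by positivity) (by positivity)
      _ = 2 ^ (2^20) * (a:ℝ) ^ (16:ℕ) := by
          rw [hacast]; ring
  have hxP : x * P ≤ 2 ^ 65536 * (a:ℝ) := by
    have h16 : (16:ℕ) ≠ 0 := by norm_num
    exact le_of_pow_le_pow_left₀ h16 (by positivity) key
  have hfinal : x ≤ 2 ^ 65536 * (a:ℝ) / P := (le_div_iff₀ hPp).mpr hxP
  rw [div_le_iff₀ hap]
  calc x ≤ 2 ^ 65536 * (a:ℝ) / P := hfinal
    _ = 2 ^ 65536 * (W : ℝ) ^ (-(1:ℝ)/4) * (u : ℝ) ^ (-(11:ℝ)/8) * (v : ℝ) ^ (-(33:ℝ)/16) * a := by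
        rw [hPdef]
        rw [show (-(1:ℝ)/4) = -((1:ℝ)/4) by ring, show (-(11:ℝ)/8) = -((11:ℝ)/8) by ring,
          show (-(33:ℝ)/16) = -((33:ℝ)/16) by ring]
        rw [Real.rpow_neg hWp.le, Real.rpow_neg hup.le, Real.rpow_neg hvp.le]
        field_simp

lemma sum_le_sum_inj {A : Finset ℕ} {B : Finset (ℕ × ℕ)} (i : ℕ → ℕ × ℕ)
    (hi : ∀ a ∈ A, i a ∈ B) (hinj : ∀ a ∈ A, ∀ a' ∈ A, i a = i a' → a = a')
    (f : ℕ → ℝ) (g : ℕ × ℕ → ℝ) (hfg : ∀ a ∈ A, f a ≤ g (i a)) (hg : ∀ b ∈ B, 0 ≤ g b) :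
    ∑ a ∈ A, f a ≤ ∑ b ∈ B, g b := by
  calc ∑ a ∈ A, f a ≤ ∑ a ∈ A, g (i a) := Finset.sum_le_sum hfg
    _ = ∑ b ∈ A.image i, g b := (Finset.sum_image hinj).symm
    _ ≤ ∑ b ∈ B, g b :=
        Finset.sum_le_sum_of_subset_of_nonneg (Finset.image_subset_iff.mpr hi)
          (fun b hb _ => hg b hb)

noncomputable def Z1 : ℝ := ∑' n : ℕ, (n:ℝ) ^ (-(11:ℝ)/8)
noncomputable def Z2 : ℝ := ∑' n : ℕ, (n:ℝ) ^ (-(33:ℝ)/16)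

lemma Z1_summable : Summable (fun n : ℕ => (n:ℝ) ^ (-(11:ℝ)/8)) :=
  Real.summable_nat_rpow.mpr (by norm_num)

lemma Z2_summable : Summable (fun n : ℕ => (n:ℝ) ^ (-(33:ℝ)/16)) :=
  Real.summable_nat_rpow.mpr (by norm_num)

lemma Z1_nonneg : 0 ≤ Z1 := tsum_nonneg fun n => Real.rpow_nonneg (Nat.cast_nonneg n) _
lemma Z2_nonneg : 0 ≤ Z2 := tsum_nonneg fun n => Real.rpow_nonneg (Nat.cast_nonneg n) _

lemma sum_prod_le (M : ℕ) :
    ∑ b ∈ (Finset.Icc 1 M ×ˢ Finset.Icc 1 M),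
      (b.1:ℝ) ^ (-(11:ℝ)/8) * (b.2:ℝ) ^ (-(33:ℝ)/16) ≤ Z1 * Z2 := by
  rw [Finset.sum_product]
  have h1 : ∀ u : ℕ, (0:ℝ) ≤ (u:ℝ) ^ (-(11:ℝ)/8) := fun u => Real.rpow_nonneg (Nat.cast_nonneg u) _
  have h2 : ∀ v : ℕ, (0:ℝ) ≤ (v:ℝ) ^ (-(33:ℝ)/16) := fun v => Real.rpow_nonneg (Nat.cast_nonneg v) _
  calc ∑ u ∈ Finset.Icc 1 M, ∑ v ∈ Finset.Icc 1 M, (u:ℝ) ^ (-(11:ℝ)/8) * (v:ℝ) ^ (-(33:ℝ)/16)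
      = (∑ u ∈ Finset.Icc 1 M, (u:ℝ) ^ (-(11:ℝ)/8))
        * (∑ v ∈ Finset.Icc 1 M, (v:ℝ) ^ (-(33:ℝ)/16)) := by
        rw [Finset.sum_mul_sum]
    _ ≤ Z1 * Z2 := by
        apply mul_le_mul
        · exact Summable.sum_le_tsum _ (fun i _ => h1 i) Z1_summable
        · exact Summable.sum_le_tsum _ (fun i _ => h2 i) Z2_summable
        · exact Finset.sum_nonneg fun v _ => h2 v
        · exact tsum_nonneg h1

end Aux
section Tail
attribute [local instance] Classical.propDecidable

lemma eta_tail_sum {β hatβ : ℕ → ℂ} (hβ : OneBoundedMult β) (hhat : CompletelyMult hatβ)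
    (hagree : ∀ p : ℕ, p.Prime → hatβ p = β p) {W M : ℕ} (hW : 10 ≤ W) :
    ∑ a ∈ Finset.Ioc W M, ‖etaConv β hatβ a‖ / a
      ≤ 2 ^ 65536 * (W : ℝ) ^ (-(1:ℝ)/4) * (Z1 * Z2) := by
  have hhatnorm : ∀ n : ℕ, n ≠ 0 → ‖hatβ n‖ ≤ 1 :=
    hatβ_norm_le hhat (fun p hp => by rw [hagree p hp]; exact hβ.1 p)
  have hfilter : ∑ a ∈ Finset.Ioc W M, ‖etaConv β hatβ a‖ / a
      = ∑ a ∈ (Finset.Ioc W M).filter IsSquarefull, ‖etaConv β hatβ a‖ / a := by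
    symm
    apply Finset.sum_filter_of_ne
    intro a ha hne
    by_contra hsf
    have : ∃ p : ℕ, p.Prime ∧ p ∣ a ∧ ¬ (p * p ∣ a) := by
      unfold IsSquarefull at hsf
      push_neg at hsf
      exact hsf
    obtain ⟨p, hp, hdvd, hnd⟩ := this
    rw [etaConv_eq_zero hβ hhat hagree hp hdvd hnd] at hne
    simp at hne
  rw [hfilter]
  have main : ∑ a ∈ (Finset.Ioc W M).filter IsSquarefull, ‖etaConv β hatβ a‖ / a
      ≤ ∑ b ∈ (Finset.Icc 1 M ×ˢ Finset.Icc 1 M),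
          2 ^ 65536 * (W : ℝ) ^ (-(1:ℝ)/4)
            * ((b.1:ℝ) ^ (-(11:ℝ)/8) * (b.2:ℝ) ^ (-(33:ℝ)/16)) := by
    apply sum_le_sum_inj uvOf
    · intro a ha
      rw [Finset.mem_filter, Finset.mem_Ioc] at ha
      obtain ⟨⟨hWa, haM⟩, hsf⟩ := ha
      have ha0 : a ≠ 0 := by omega
      obtain ⟨hu, hv, he⟩ := uvOf_spec ha0 hsf
      rw [Finset.mem_product, Finset.mem_Icc, Finset.mem_Icc]
      have hu1 : (uvOf a).1 ≤ M := by
        refine le_trans ?_ haM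
        calc (uvOf a).1 ≤ (uvOf a).1 ^ 2 := Nat.le_self_pow two_ne_zero _
          _ ≤ (uvOf a).1 ^ 2 * (uvOf a).2 ^ 3 :=
              Nat.le_mul_of_pos_right _ (Nat.pos_of_ne_zero (pow_ne_zero _ hv))
          _ = a := he.symm
      have hv1 : (uvOf a).2 ≤ M := by
        refine le_trans ?_ haM
        calc (uvOf a).2 ≤ (uvOf a).2 ^ 3 := Nat.le_self_pow three_ne_zero _
          _ ≤ (uvOf a).1 ^ 2 * (uvOf a).2 ^ 3 :=
              Nat.le_mul_of_pos_left _ (Nat.pos_of_ne_zero (pow_ne_zero _ hu))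
          _ = a := he.symm
      exact ⟨⟨Nat.one_le_iff_ne_zero.mpr hu, hu1⟩, ⟨Nat.one_le_iff_ne_zero.mpr hv, hv1⟩⟩
    · intro a ha a' ha' heq
      rw [Finset.mem_filter, Finset.mem_Ioc] at ha ha'
      have ha0 : a ≠ 0 := by omega
      have ha0' : a' ≠ 0 := by omega
      obtain ⟨-, -, he⟩ := uvOf_spec ha0 ha.2
      obtain ⟨-, -, he'⟩ := uvOf_spec ha0' ha'.2
      rw [he, he', heq]
    · intro a ha
      rw [Finset.mem_filter, Finset.mem_Ioc] at ha
      obtain ⟨⟨hWa, haM⟩, hsf⟩ := ha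
      have ha0 : a ≠ 0 := by omega
      obtain ⟨hu, hv, he⟩ := uvOf_spec ha0 hsf
      have hx16 : ‖etaConv β hatβ a‖ ^ 16 ≤ 2 ^ (2 ^ 20) * (a : ℝ) := by
        calc ‖etaConv β hatβ a‖ ^ 16 ≤ ((2:ℝ) ^ a.primeFactors.card) ^ 16 := by
              apply pow_le_pow_left₀ (norm_nonneg _) (etaConv_norm_le hβ.1 hhatnorm ha0)
          _ = (((2 ^ (16 * a.primeFactors.card) : ℕ)) : ℝ) := by
              push_cast
              rw [← pow_mul, mul_comm]
          _ ≤ (((2 ^ (2 ^ 20) * a : ℕ)) : ℝ) := by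
              exact_mod_cast pow_omega_le ha0
          _ = 2 ^ (2 ^ 20) * (a : ℝ) := by push_cast; ring
      have := per_term (norm_nonneg (etaConv β hatβ a)) hu hv (by omega : W ≠ 0) he hWa hx16
      calc ‖etaConv β hatβ a‖ / a
          ≤ 2 ^ 65536 * (W : ℝ) ^ (-(1:ℝ)/4) * ((uvOf a).1 : ℝ) ^ (-(11:ℝ)/8)
            * ((uvOf a).2 : ℝ) ^ (-(33:ℝ)/16) := this
        _ = 2 ^ 65536 * (W : ℝ) ^ (-(1:ℝ)/4)
            * (((uvOf a).1:ℝ) ^ (-(11:ℝ)/8) * ((uvOf a).2:ℝ) ^ (-(33:ℝ)/16)) := by ring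
    · intro b hb
      positivity
  calc _ ≤ _ := main
    _ = 2 ^ 65536 * (W : ℝ) ^ (-(1:ℝ)/4)
        * ∑ b ∈ (Finset.Icc 1 M ×ˢ Finset.Icc 1 M),
            ((b.1:ℝ) ^ (-(11:ℝ)/8) * (b.2:ℝ) ^ (-(33:ℝ)/16)) := by
        rw [Finset.mul_sum]
    _ ≤ 2 ^ 65536 * (W : ℝ) ^ (-(1:ℝ)/4) * (Z1 * Z2) := by
        apply mul_le_mul_of_nonneg_left (sum_prod_le M)
        positivity

end Tail

lemma k_collapse {W H : ℕ} (hW : 0 < W) (x : ℝ) :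
    ∑ k ∈ Finset.Icc 1 (W^2),
      (if ((k:ℝ)-1) * H / (W:ℝ)^2 < x ∧ x ≤ (k:ℝ) * H / (W:ℝ)^2 then (1:ℝ) else 0)
      ≤ (if 0 < x ∧ x ≤ (H:ℝ) then 1 else 0) := by
  classical
  have hWr : (0:ℝ) < (W:ℝ)^2 := by positivity
  set P : ℕ → Prop := fun k => ((k:ℝ)-1) * H / (W:ℝ)^2 < x ∧ x ≤ (k:ℝ) * H / (W:ℝ)^2 with hP
  rw [Finset.sum_boole]
  rcases Finset.eq_empty_or_nonempty ((Finset.Icc 1 (W^2)).filter P) with hemp | ⟨k0, hk0⟩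
  · rw [hemp]
    simp only [Finset.card_empty, Nat.cast_zero]
    split_ifs <;> norm_num
  · obtain ⟨hk0m, hk0P⟩ := Finset.mem_filter.mp hk0
    rw [Finset.mem_Icc] at hk0m
    have hpos : 0 < x := by
      refine lt_of_le_of_lt ?_ hk0P.1
      apply div_nonneg _ hWr.le
      apply mul_nonneg _ (Nat.cast_nonneg H)
      have : (1:ℝ) ≤ (k0:ℝ) := by exact_mod_cast hk0m.1
      linarith
    have hxH : x ≤ (H:ℝ) := by
      refine hk0P.2.trans ?_
      rw [div_le_iff₀ hWr]
      have hk0W : (k0:ℝ) ≤ (W:ℝ)^2 := by exact_mod_cast hk0m.2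
      have : (0:ℝ) ≤ H := Nat.cast_nonneg H
      nlinarith
    rw [if_pos ⟨hpos, hxH⟩]
    have hcard : ((Finset.Icc 1 (W^2)).filter P).card ≤ 1 := by
      rw [Finset.card_le_one]
      intro k hk k' hk'
      have hkP := (Finset.mem_filter.mp hk).2
      have hk'P := (Finset.mem_filter.mp hk').2
      have h1 : ((k':ℝ) - 1) * H / (W:ℝ)^2 < (k:ℝ) * H / (W:ℝ)^2 := lt_of_lt_of_le hk'P.1 hkP.2
      have h2 : ((k:ℝ) - 1) * H / (W:ℝ)^2 < (k':ℝ) * H / (W:ℝ)^2 := lt_of_lt_of_le hkP.1 hk'P.2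
      rw [div_lt_div_iff₀ hWr hWr] at h1 h2
      have hH0 : (0:ℝ) < H := by
        rcases Nat.eq_zero_or_pos H with h | h
        · exfalso
          rw [h] at hxH
          simp at hxH
          linarith
        · exact_mod_cast h
      have e1 : (k':ℝ) - 1 < k := by nlinarith
      have e2 : (k:ℝ) - 1 < k' := by nlinarith
      have : k' < k + 1 := by exact_mod_cast (by linarith : (k':ℝ) < k + 1)
      have : k < k' + 1 := by exact_mod_cast (by linarith : (k:ℝ) < k' + 1)
      omega
    calc (((Finset.Icc 1 (W^2)).filter P).card : ℝ) ≤ ((1:ℕ):ℝ) := Nat.cast_le.mpr hcard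
      _ = 1 := Nat.cast_one

lemma n_count {a b H N : ℕ} :
    ∑ n ∈ Finset.Icc 1 N, (if n < a * b ∧ a * b ≤ n + H then (1:ℝ) else 0)
      ≤ (if a * b ≤ N + H then (H:ℝ) else 0) := by
  classical
  set P : ℕ → Prop := fun n => n < a * b ∧ a * b ≤ n + H with hP
  have hsum : ∑ n ∈ Finset.Icc 1 N, (if P n then (1:ℝ) else 0)
      = ((Finset.Icc 1 N).filter P).card := by
    rw [Finset.sum_ite, Finset.sum_const, Finset.sum_const]
    simp
  rw [hsum]
  rcases Nat.eq_zero_or_pos (a * b) with hab0 | hab0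
  · have : (Finset.Icc 1 N).filter P = ∅ := by
      rw [Finset.filter_eq_empty_iff]
      intro n hn
      rw [hP]
      omega
    rw [this]
    split_ifs <;> simp
  by_cases hab : a * b ≤ N + H
  · rw [if_pos hab]
    have hsub : (Finset.Icc 1 N).filter P ⊆ Finset.Icc (a*b - H) (a*b - 1) := by
      intro n hn
      obtain ⟨hn1, hn2⟩ := Finset.mem_filter.mp hn
      rw [Finset.mem_Icc] at hn1 ⊢
      omega
    have hcard := Finset.card_le_card hsub
    rw [Nat.card_Icc] at hcard
    have : ((Finset.Icc 1 N).filter P).card ≤ H := by omega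
    calc (((Finset.Icc 1 N).filter P).card : ℝ) ≤ ((H:ℕ):ℝ) := Nat.cast_le.mpr this
      _ = (H:ℝ) := rfl
  · rw [if_neg hab]
    have : (Finset.Icc 1 N).filter P = ∅ := by
      rw [Finset.filter_eq_empty_iff]
      intro n hn
      rw [Finset.mem_Icc] at hn
      rw [hP]
      push_neg
      intro _
      omega
    rw [this]
    simp

lemma b_count {a H N : ℕ} (ha : 0 < a) :
    ∑ b ∈ Finset.Icc 1 (N + H), (if a * b ≤ N + H then (H:ℝ) else 0)
      ≤ (H:ℝ) * ((N + H : ℕ) : ℝ) / a := by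
  classical
  set P : ℕ → Prop := fun b => a * b ≤ N + H with hP
  have hsum : ∑ b ∈ Finset.Icc 1 (N+H), (if P b then (H:ℝ) else 0)
      = ((Finset.Icc 1 (N+H)).filter P).card * (H:ℝ) := by
    rw [Finset.sum_ite, Finset.sum_const, Finset.sum_const]
    simp [mul_comm]
  rw [hsum]
  have hsub : (Finset.Icc 1 (N+H)).filter P ⊆ Finset.Icc 1 ((N+H)/a) := by
    intro b hb
    obtain ⟨hb1, hb2⟩ := Finset.mem_filter.mp hb
    rw [Finset.mem_Icc] at hb1 ⊢
    refine ⟨hb1.1, ?_⟩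
    rw [Nat.le_div_iff_mul_le ha]
    rw [mul_comm]
    exact hb2
  have hcard := Finset.card_le_card hsub
  rw [Nat.card_Icc] at hcard
  rw [Nat.add_sub_cancel] at hcard
  have h1 : (((Finset.Icc 1 (N+H)).filter P).card : ℝ) ≤ (((N+H)/a : ℕ) : ℝ) :=
    Nat.cast_le.mpr hcard
  have h2 : (((N+H)/a : ℕ) : ℝ) ≤ ((N+H : ℕ):ℝ) / (a:ℝ) := Nat.cast_div_le
  calc (((Finset.Icc 1 (N+H)).filter P).card : ℝ) * (H:ℝ)
      ≤ ((N+H:ℕ):ℝ) / (a:ℝ) * (H:ℝ) := by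
        apply mul_le_mul_of_nonneg_right (h1.trans h2) (Nat.cast_nonneg H)
    _ = (H:ℝ) * ((N + H : ℕ) : ℝ) / a := by ring

/-- The tail (`a > W`) of the expansion `β = β̂ * η` contributes at most
`C W^{-1/4} H N` to the bilinear sum, for any `1`-bounded weights `c(n,k,a,b)` attached
to the quadruples with `ab ∈ n + I_k`, `I_k = ((k-1)W⁻²H, kW⁻²H]`. -/
theorem stmt6 :
    ∃ C : ℝ, 0 < C ∧
      ∀ (W H N : ℕ), 10 ≤ W → W ^ 12 ≤ H → H ≤ N →
        ∀ β hatβ : ℕ → ℂ, OneBoundedMult β → CompletelyMult hatβ →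
          (∀ p : ℕ, p.Prime → hatβ p = β p) →
        ∀ c : ℕ → ℕ → ℕ → ℕ → ℂ, (∀ n k a b, ‖c n k a b‖ ≤ 1) →
          ‖∑ n ∈ Finset.Icc 1 N, ∑ k ∈ Finset.Icc 1 (W ^ 2),
              ∑ a ∈ Finset.Ioc W (N + H), etaConv β hatβ a *
                ∑ b ∈ Finset.Icc 1 (N + H),
                  (if ((k : ℝ) - 1) * H / (W : ℝ) ^ 2 < ((a * b : ℕ) : ℝ) - (n : ℝ) ∧
                      ((a * b : ℕ) : ℝ) - (n : ℝ) ≤ (k : ℝ) * H / (W : ℝ) ^ 2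
                   then c n k a b else 0)‖
            ≤ C * (W : ℝ) ^ (-(1 : ℝ) / 4) * (H : ℝ) * (N : ℝ) := by
  classical
  have hZZ : (0:ℝ) ≤ Z1 * Z2 := mul_nonneg Z1_nonneg Z2_nonneg
  have hC0 : (0:ℝ) < 2 ^ 65537 * (Z1 * Z2) + 1 := by positivity
  refine ⟨2 ^ 65537 * (Z1 * Z2) + 1, hC0, ?_⟩
  intro W H N hW hH hHN β hatβ hβ hhat hagree c hc
  have hW0 : 0 < W := by omega
  have hH0 : 0 < H := lt_of_lt_of_le (pow_pos (by omega) 12) hH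
  have hN0 : 0 < N := lt_of_lt_of_le hH0 hHN
  set J : ℕ → ℕ → ℕ → ℕ → ℝ := fun n k a b =>
    if ((k : ℝ) - 1) * H / (W : ℝ) ^ 2 < ((a * b : ℕ) : ℝ) - (n : ℝ) ∧
        ((a * b : ℕ) : ℝ) - (n : ℝ) ≤ (k : ℝ) * H / (W : ℝ) ^ 2 then (1:ℝ) else 0 with hJ
  -- Step A : push the norm inside and reorder
  have stepA : ‖∑ n ∈ Finset.Icc 1 N, ∑ k ∈ Finset.Icc 1 (W ^ 2),
      ∑ a ∈ Finset.Ioc W (N + H), etaConv β hatβ a *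
        ∑ b ∈ Finset.Icc 1 (N + H),
          (if ((k : ℝ) - 1) * H / (W : ℝ) ^ 2 < ((a * b : ℕ) : ℝ) - (n : ℝ) ∧
              ((a * b : ℕ) : ℝ) - (n : ℝ) ≤ (k : ℝ) * H / (W : ℝ) ^ 2
           then c n k a b else 0)‖
      ≤ ∑ a ∈ Finset.Ioc W (N + H), ‖etaConv β hatβ a‖ *
          ∑ n ∈ Finset.Icc 1 N, ∑ k ∈ Finset.Icc 1 (W ^ 2),
            ∑ b ∈ Finset.Icc 1 (N + H), J n k a b := by
    have h1 : ∀ n k a : ℕ, ‖etaConv β hatβ a *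
        ∑ b ∈ Finset.Icc 1 (N + H),
          (if ((k : ℝ) - 1) * H / (W : ℝ) ^ 2 < ((a * b : ℕ) : ℝ) - (n : ℝ) ∧
              ((a * b : ℕ) : ℝ) - (n : ℝ) ≤ (k : ℝ) * H / (W : ℝ) ^ 2
           then c n k a b else 0)‖
        ≤ ‖etaConv β hatβ a‖ * ∑ b ∈ Finset.Icc 1 (N + H), J n k a b := by
      intro n k a
      rw [norm_mul]
      apply mul_le_mul_of_nonneg_left _ (norm_nonneg _)
      refine (norm_sum_le _ _).trans (Finset.sum_le_sum fun b _ => ?_)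
      rw [hJ]
      simp only
      split_ifs with hcond
      · exact hc n k a b
      · rw [norm_zero]
    calc ‖∑ n ∈ Finset.Icc 1 N, ∑ k ∈ Finset.Icc 1 (W ^ 2),
        ∑ a ∈ Finset.Ioc W (N + H), etaConv β hatβ a *
          ∑ b ∈ Finset.Icc 1 (N + H),
            (if ((k : ℝ) - 1) * H / (W : ℝ) ^ 2 < ((a * b : ℕ) : ℝ) - (n : ℝ) ∧
                ((a * b : ℕ) : ℝ) - (n : ℝ) ≤ (k : ℝ) * H / (W : ℝ) ^ 2
             then c n k a b else 0)‖
        ≤ ∑ n ∈ Finset.Icc 1 N, ∑ k ∈ Finset.Icc 1 (W ^ 2),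
            ∑ a ∈ Finset.Ioc W (N + H), ‖etaConv β hatβ a‖ *
              ∑ b ∈ Finset.Icc 1 (N + H), J n k a b := by
          refine (norm_sum_le _ _).trans (Finset.sum_le_sum fun n _ => ?_)
          refine (norm_sum_le _ _).trans (Finset.sum_le_sum fun k _ => ?_)
          refine (norm_sum_le _ _).trans (Finset.sum_le_sum fun a _ => ?_)
          exact h1 n k a
      _ = ∑ n ∈ Finset.Icc 1 N, ∑ a ∈ Finset.Ioc W (N + H), ∑ k ∈ Finset.Icc 1 (W ^ 2),
            ‖etaConv β hatβ a‖ * ∑ b ∈ Finset.Icc 1 (N + H), J n k a b :=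
          Finset.sum_congr rfl fun n _ => Finset.sum_comm
      _ = ∑ a ∈ Finset.Ioc W (N + H), ∑ n ∈ Finset.Icc 1 N, ∑ k ∈ Finset.Icc 1 (W ^ 2),
            ‖etaConv β hatβ a‖ * ∑ b ∈ Finset.Icc 1 (N + H), J n k a b :=
          Finset.sum_comm
      _ = ∑ a ∈ Finset.Ioc W (N + H), ‖etaConv β hatβ a‖ *
            ∑ n ∈ Finset.Icc 1 N, ∑ k ∈ Finset.Icc 1 (W ^ 2),
              ∑ b ∈ Finset.Icc 1 (N + H), J n k a b := by
          refine Finset.sum_congr rfl fun a _ => ?_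
          rw [Finset.mul_sum]
          refine Finset.sum_congr rfl fun n _ => ?_
          rw [Finset.mul_sum]
  -- Step B : count the inner sums
  have stepB : ∀ a ∈ Finset.Ioc W (N + H),
      ∑ n ∈ Finset.Icc 1 N, ∑ k ∈ Finset.Icc 1 (W ^ 2),
        ∑ b ∈ Finset.Icc 1 (N + H), J n k a b
      ≤ (H:ℝ) * ((N + H : ℕ) : ℝ) / a := by
    intro a ha
    rw [Finset.mem_Ioc] at ha
    have ha0 : 0 < a := by omega
    have hswap : ∀ n : ℕ, ∑ k ∈ Finset.Icc 1 (W ^ 2), ∑ b ∈ Finset.Icc 1 (N + H), J n k a b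
        = ∑ b ∈ Finset.Icc 1 (N + H), ∑ k ∈ Finset.Icc 1 (W ^ 2), J n k a b :=
      fun n => Finset.sum_comm
    have hcoll : ∀ n b : ℕ, ∑ k ∈ Finset.Icc 1 (W ^ 2), J n k a b
        ≤ (if n < a * b ∧ a * b ≤ n + H then (1:ℝ) else 0) := by
      intro n b
      have hk := k_collapse (H := H) hW0 (((a * b : ℕ) : ℝ) - (n : ℝ))
      refine le_trans (le_of_eq ?_) (hk.trans (le_of_eq ?_))
      · rfl
      · refine if_congr ?_ rfl rfl
        rw [sub_pos, sub_le_iff_le_add]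
        constructor
        · rintro ⟨h1, h2⟩
          refine ⟨by exact_mod_cast h1, ?_⟩
          have h2' : ((a*b : ℕ) : ℝ) ≤ ((n + H : ℕ) : ℝ) := by push_cast; push_cast at h2; linarith
          exact_mod_cast h2'
        · rintro ⟨h1, h2⟩
          refine ⟨by exact_mod_cast h1, ?_⟩
          have h2' : ((a*b : ℕ) : ℝ) ≤ ((n + H : ℕ) : ℝ) := by exact_mod_cast h2
          push_cast at h2' ⊢
          linarith
    calc ∑ n ∈ Finset.Icc 1 N, ∑ k ∈ Finset.Icc 1 (W ^ 2),
          ∑ b ∈ Finset.Icc 1 (N + H), J n k a b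
        = ∑ n ∈ Finset.Icc 1 N, ∑ b ∈ Finset.Icc 1 (N + H),
            ∑ k ∈ Finset.Icc 1 (W ^ 2), J n k a b := Finset.sum_congr rfl fun n _ => hswap n
      _ ≤ ∑ n ∈ Finset.Icc 1 N, ∑ b ∈ Finset.Icc 1 (N + H),
            (if n < a * b ∧ a * b ≤ n + H then (1:ℝ) else 0) := by
          refine Finset.sum_le_sum fun n _ => Finset.sum_le_sum fun b _ => hcoll n b
      _ = ∑ b ∈ Finset.Icc 1 (N + H), ∑ n ∈ Finset.Icc 1 N,
            (if n < a * b ∧ a * b ≤ n + H then (1:ℝ) else 0) := Finset.sum_comm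
      _ ≤ ∑ b ∈ Finset.Icc 1 (N + H), (if a * b ≤ N + H then (H:ℝ) else 0) :=
          Finset.sum_le_sum fun b _ => n_count
      _ ≤ (H:ℝ) * ((N + H : ℕ) : ℝ) / a := b_count ha0
  -- Step C : assemble
  have hηnonneg : ∀ a : ℕ, (0:ℝ) ≤ ‖etaConv β hatβ a‖ := fun a => norm_nonneg _
  have stepC : ∑ a ∈ Finset.Ioc W (N + H), ‖etaConv β hatβ a‖ *
      (∑ n ∈ Finset.Icc 1 N, ∑ k ∈ Finset.Icc 1 (W ^ 2),
        ∑ b ∈ Finset.Icc 1 (N + H), J n k a b)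
      ≤ (H:ℝ) * ((N + H : ℕ) : ℝ) *
          ∑ a ∈ Finset.Ioc W (N + H), ‖etaConv β hatβ a‖ / a := by
    calc ∑ a ∈ Finset.Ioc W (N + H), ‖etaConv β hatβ a‖ *
        (∑ n ∈ Finset.Icc 1 N, ∑ k ∈ Finset.Icc 1 (W ^ 2),
          ∑ b ∈ Finset.Icc 1 (N + H), J n k a b)
        ≤ ∑ a ∈ Finset.Ioc W (N + H), ‖etaConv β hatβ a‖ * ((H:ℝ) * ((N + H : ℕ) : ℝ) / a) := by
          refine Finset.sum_le_sum fun a ha => ?_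
          exact mul_le_mul_of_nonneg_left (stepB a ha) (hηnonneg a)
      _ = (H:ℝ) * ((N + H : ℕ) : ℝ) * ∑ a ∈ Finset.Ioc W (N + H), ‖etaConv β hatβ a‖ / a := by
          rw [Finset.mul_sum]
          refine Finset.sum_congr rfl fun a _ => ?_
          ring
  have tail := eta_tail_sum hβ hhat hagree (M := N + H) hW
  have hrpow : (0:ℝ) ≤ (W : ℝ) ^ (-(1:ℝ)/4) := Real.rpow_nonneg (Nat.cast_nonneg W) _
  have hHM : (0:ℝ) ≤ (H:ℝ) * ((N + H : ℕ) : ℝ) := by positivity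
  calc ‖∑ n ∈ Finset.Icc 1 N, ∑ k ∈ Finset.Icc 1 (W ^ 2),
      ∑ a ∈ Finset.Ioc W (N + H), etaConv β hatβ a *
        ∑ b ∈ Finset.Icc 1 (N + H),
          (if ((k : ℝ) - 1) * H / (W : ℝ) ^ 2 < ((a * b : ℕ) : ℝ) - (n : ℝ) ∧
              ((a * b : ℕ) : ℝ) - (n : ℝ) ≤ (k : ℝ) * H / (W : ℝ) ^ 2
           then c n k a b else 0)‖
      ≤ ∑ a ∈ Finset.Ioc W (N + H), ‖etaConv β hatβ a‖ *
          ∑ n ∈ Finset.Icc 1 N, ∑ k ∈ Finset.Icc 1 (W ^ 2),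
            ∑ b ∈ Finset.Icc 1 (N + H), J n k a b := stepA
    _ ≤ (H:ℝ) * ((N + H : ℕ) : ℝ) *
          ∑ a ∈ Finset.Ioc W (N + H), ‖etaConv β hatβ a‖ / a := stepC
    _ ≤ (H:ℝ) * ((N + H : ℕ) : ℝ) * (2 ^ 65536 * (W : ℝ) ^ (-(1:ℝ)/4) * (Z1 * Z2)) :=
        mul_le_mul_of_nonneg_left tail hHM
    _ ≤ (H:ℝ) * (2 * (N:ℝ)) * (2 ^ 65536 * (W : ℝ) ^ (-(1:ℝ)/4) * (Z1 * Z2)) := by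
        have h1 : ((N + H : ℕ) : ℝ) ≤ 2 * (N:ℝ) := by
          push_cast
          have : (H:ℝ) ≤ N := by exact_mod_cast hHN
          linarith
        have h2 : (0:ℝ) ≤ 2 ^ 65536 * (W : ℝ) ^ (-(1:ℝ)/4) * (Z1 * Z2) := by positivity
        apply mul_le_mul_of_nonneg_right _ h2
        apply mul_le_mul_of_nonneg_left h1 (Nat.cast_nonneg H)
    _ = 2 ^ 65537 * (Z1 * Z2) * (W : ℝ) ^ (-(1 : ℝ) / 4) * (H : ℝ) * (N : ℝ) := by
        rw [show (-(1:ℝ)/4) = (-(1:ℝ))/4 by norm_num]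
        rw [show (2:ℝ) ^ 65537 = 2 ^ 65536 * 2 from pow_succ 2 65536]
        ring
    _ ≤ (2 ^ 65537 * (Z1 * Z2) + 1) * (W : ℝ) ^ (-(1 : ℝ) / 4) * (H : ℝ) * (N : ℝ) := by
        have h3 : (0:ℝ) ≤ (W : ℝ) ^ (-(1:ℝ)/4) * (H:ℝ) * (N:ℝ) := by positivity
        nlinarith [h3]
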